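/- arXiv:1804.00101 — 4 statements merged into one kernel-verified Lean document; each statement's English description precedes it below -/
import Mathlib

section
/- Let A be a finite nonempty set of points in the plane and let η > 0 be an opening cost. If 𝒞 is an optimal partition for (A, η), then the convex hulls of the clusters of 𝒞 are pairwise disjoint: for any two distinct clusters C₁, C₂ ∈ 𝒞 one has convexHull(C₁) ∩ convexHull(C₂) = ∅. -/
noncomputable section

/-- The Euclidean plane. -/
abbrev Plane := EuclideanSpace ℝ (Fin 2)

/-- Perimeter of a bounded set via Cauchy's formula. -/
noncomputable def perim (C : Set Plane) : ℝ :=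
  ∫ θ in (0:ℝ)..(2 * Real.pi),
    sSup ((fun p : Plane => p 0 * Real.cos θ + p 1 * Real.sin θ) '' C)

/-- `P` is a partition of `A` into nonempty clusters. -/
def IsPartition (A : Set Plane) (P : Finset (Set Plane)) : Prop :=
  (∀ C ∈ P, (C : Set Plane).Nonempty) ∧
  (⋃₀ (P : Set (Set Plane)) = A) ∧
  ((P : Set (Set Plane)).PairwiseDisjoint id)

/-- Cost of a partition with opening cost `η` per cluster. -/
noncomputable def cost (η : ℝ) (P : Finset (Set Plane)) : ℝ :=
  η * P.card + ∑ C ∈ P, perim C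

/-- `P` is an optimal partition for `(A, η)`. -/
def IsOptimalPartition (η : ℝ) (A : Set Plane) (P : Finset (Set Plane)) : Prop :=
  IsPartition A P ∧ ∀ Q : Finset (Set Plane), IsPartition A Q → cost η P ≤ cost η Q

/-- `A` is indivisible for `η`: the one-block partition `{A}` is optimal. -/
def Indivisible (η : ℝ) (A : Set Plane) : Prop :=
  IsOptimalPartition η A {A}

/-- A maximal optimal partition of `(A, η)`. -/
def IsMaximalOptimal (η : ℝ) (A : Set Plane) (P : Finset (Set Plane)) : Prop :=
  IsOptimalPartition η A P ∧
  ¬ ∃ Q : Finset (Set Plane), IsOptimalPartition η A Q ∧ Q.card < P.card ∧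
      ∀ C ∈ P, ∃ C' ∈ Q, C ⊆ C'

/-! Auxiliary material -/

/-- The direction functional. -/
def gdir (θ : ℝ) (p : Plane) : ℝ := p 0 * Real.cos θ + p 1 * Real.sin θ

lemma gdir_linear (θ : ℝ) : IsLinearMap ℝ (gdir θ) := by
  constructor <;> intro a b <;>
    simp [gdir, PiLp.add_apply, PiLp.smul_apply, smul_eq_mul] <;> ring

/-- Support function of a finite nonempty set, as a `Finset.sup'`. -/
lemma sSup_image_eq_sup' {C : Set Plane} (hC : C.Finite) (hne : C.Nonempty) (θ : ℝ) :
    sSup (gdir θ '' C) = hC.toFinset.sup' (by simpa using hne) (gdir θ) := by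
  rw [Finset.sup'_eq_csSup_image]
  congr 1
  simp

lemma continuous_suppfun {C : Set Plane} (hC : C.Finite) (hne : C.Nonempty) :
    Continuous (fun θ => sSup (gdir θ '' C)) := by
  have : (fun θ => sSup (gdir θ '' C))
      = fun θ => hC.toFinset.sup' (by simpa using hne) (fun p => gdir θ p) := by
    funext θ; exact sSup_image_eq_sup' hC hne θ
  rw [this]
  exact Continuous.finset_sup'_apply _ fun p _ => by
    unfold gdir
    fun_prop

lemma bddAbove_image {C : Set Plane} (hC : C.Finite) (θ : ℝ) :
    BddAbove (gdir θ '' C) := (hC.image _).bddAbove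

/-- Points of the convex hull are dominated by the support function. -/
lemma gdir_le_sSup {C : Set Plane} (hC : C.Finite) (θ : ℝ)
    {x : Plane} (hx : x ∈ convexHull ℝ C) : gdir θ x ≤ sSup (gdir θ '' C) := by
  have hsub : C ⊆ {p : Plane | gdir θ p ≤ sSup (gdir θ '' C)} := by
    intro p hp
    exact le_csSup (bddAbove_image hC θ) ⟨p, hp, rfl⟩
  have hconv : Convex ℝ {p : Plane | gdir θ p ≤ sSup (gdir θ '' C)} :=
    convex_halfSpace_le (gdir_linear θ) _
  exact convexHull_min hsub hconv hx

lemma sSup_image_union {C₁ C₂ : Set Plane} (h₁ : C₁.Finite) (h₂ : C₂.Finite)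
    (hn₁ : C₁.Nonempty) (hn₂ : C₂.Nonempty) (θ : ℝ) :
    sSup (gdir θ '' (C₁ ∪ C₂)) = max (sSup (gdir θ '' C₁)) (sSup (gdir θ '' C₂)) := by
  rw [Set.image_union]
  exact csSup_union (bddAbove_image h₁ θ) (hn₁.image _) (bddAbove_image h₂ θ) (hn₂.image _)

lemma integral_gdir_zero (x : Plane) :
    (∫ θ in (0:ℝ)..(2 * Real.pi), gdir θ x) = 0 := by
  unfold gdir
  rw [intervalIntegral.integral_add, intervalIntegral.integral_const_mul,
    intervalIntegral.integral_const_mul, integral_cos, integral_sin]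
  · simp [Real.sin_two_pi, Real.cos_two_pi]
  · exact (continuous_const.mul Real.continuous_cos).intervalIntegrable _ _
  · exact (continuous_const.mul Real.continuous_sin).intervalIntegrable _ _

/-- Key geometric fact: merging two clusters with intersecting hulls does not
increase total perimeter. -/
lemma perim_union_le {C₁ C₂ : Set Plane} (h₁ : C₁.Finite) (h₂ : C₂.Finite)
    (hn₁ : C₁.Nonempty) (hn₂ : C₂.Nonempty) {x : Plane}
    (hx₁ : x ∈ convexHull ℝ C₁) (hx₂ : x ∈ convexHull ℝ C₂) :
    perim (C₁ ∪ C₂) ≤ perim C₁ + perim C₂ := by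
  set f₁ : ℝ → ℝ := fun θ => sSup (gdir θ '' C₁) with hf₁
  set f₂ : ℝ → ℝ := fun θ => sSup (gdir θ '' C₂) with hf₂
  have hc₁ : Continuous f₁ := continuous_suppfun h₁ hn₁
  have hc₂ : Continuous f₂ := continuous_suppfun h₂ hn₂
  have hcℓ : Continuous (fun θ => gdir θ x) := by unfold gdir; fun_prop
  have hi₁ : IntervalIntegrable f₁ MeasureTheory.volume 0 (2 * Real.pi) :=
    hc₁.intervalIntegrable _ _
  have hi₂ : IntervalIntegrable f₂ MeasureTheory.volume 0 (2 * Real.pi) :=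
    hc₂.intervalIntegrable _ _
  have hiℓ : IntervalIntegrable (fun θ => gdir θ x) MeasureTheory.volume 0 (2 * Real.pi) :=
    hcℓ.intervalIntegrable _ _
  have hperim : perim (C₁ ∪ C₂)
      = ∫ θ in (0:ℝ)..(2 * Real.pi), max (f₁ θ) (f₂ θ) := by
    unfold perim
    congr 1
    funext θ
    exact sSup_image_union h₁ h₂ hn₁ hn₂ θ
  have hmono : ∀ θ ∈ Set.Icc (0:ℝ) (2 * Real.pi),
      max (f₁ θ) (f₂ θ) ≤ f₁ θ + f₂ θ - gdir θ x := by
    intro θ _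
    have k₁ : gdir θ x ≤ f₁ θ := gdir_le_sSup h₁ θ hx₁
    have k₂ : gdir θ x ≤ f₂ θ := gdir_le_sSup h₂ θ hx₂
    rcases le_total (f₁ θ) (f₂ θ) with h | h
    · rw [max_eq_right h]; linarith
    · rw [max_eq_left h]; linarith
  have hineq : (∫ θ in (0:ℝ)..(2 * Real.pi), max (f₁ θ) (f₂ θ))
      ≤ ∫ θ in (0:ℝ)..(2 * Real.pi), (f₁ θ + f₂ θ - gdir θ x) := by
    apply intervalIntegral.integral_mono_on
      (by positivity)
      ((hc₁.max hc₂).intervalIntegrable _ _)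
      ((hi₁.add hi₂).sub hiℓ)
      hmono
  have hsplit : (∫ θ in (0:ℝ)..(2 * Real.pi), (f₁ θ + f₂ θ - gdir θ x))
      = perim C₁ + perim C₂ := by
    rw [intervalIntegral.integral_sub (hi₁.add hi₂) hiℓ,
      intervalIntegral.integral_add hi₁ hi₂, integral_gdir_zero]
    unfold perim
    simp [hf₁, hf₂, gdir]
    rfl
  rw [hperim]
  linarith [hineq, hsplit.le, hsplit.ge]

/-- clusters of an optimal partition have pairwise disjoint convex hulls. -/
theorem optimal_partition_disjoint_hulls
    (A : Set Plane) (hA : A.Finite) (hAne : A.Nonempty) (η : ℝ) (hη : 0 < η)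
    (P : Finset (Set Plane)) (hP : IsOptimalPartition η A P) :
    ∀ C₁ ∈ P, ∀ C₂ ∈ P, C₁ ≠ C₂ →
      convexHull ℝ C₁ ∩ convexHull ℝ C₂ = ∅ := by
  classical
  intro C₁ hC₁ C₂ hC₂ hne
  by_contra hcon
  obtain ⟨x, hx₁, hx₂⟩ := Set.nonempty_iff_ne_empty.2 hcon
  obtain ⟨⟨hPne, hPun, hPdisj⟩, hopt⟩ := hP
  -- clusters are subsets of A
  have hsubA : ∀ C ∈ P, C ⊆ A := by
    intro C hC
    rw [← hPun]
    exact Set.subset_sUnion_of_mem hC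
  have hf₁ : C₁.Finite := hA.subset (hsubA C₁ hC₁)
  have hf₂ : C₂.Finite := hA.subset (hsubA C₂ hC₂)
  have hn₁ : C₁.Nonempty := hPne C₁ hC₁
  have hn₂ : C₂.Nonempty := hPne C₂ hC₂
  -- the merged partition
  set R : Finset (Set Plane) := (P.erase C₁).erase C₂ with hR
  set Q : Finset (Set Plane) := insert (C₁ ∪ C₂) R with hQ
  have hC₂e : C₂ ∈ P.erase C₁ := Finset.mem_erase.2 ⟨Ne.symm hne, hC₂⟩
  have hRsub : ∀ C ∈ R, C ∈ P := fun C hC =>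
    Finset.mem_of_mem_erase (Finset.mem_of_mem_erase hC)
  have hRne1 : ∀ C ∈ R, C ≠ C₁ := fun C hC =>
    (Finset.mem_erase.1 (Finset.mem_of_mem_erase hC)).1
  have hRne2 : ∀ C ∈ R, C ≠ C₂ := fun C hC => (Finset.mem_erase.1 hC).1
  -- the union is not an element of R
  have hUnotR : C₁ ∪ C₂ ∉ R := by
    intro hmem
    have hD : C₁ ∪ C₂ ∈ P := hRsub _ hmem
    have hDne : (C₁ ∪ C₂ : Set Plane) ≠ C₁ := hRne1 _ hmem
    have hdisj : Disjoint (C₁ ∪ C₂ : Set Plane) C₁ := hPdisj hD hC₁ hDne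
    have : Disjoint C₁ C₁ := hdisj.mono_left Set.subset_union_left
    rw [disjoint_self] at this
    exact hn₁.ne_empty this
  -- Q is a partition of A
  have hQpart : IsPartition A Q := by
    refine ⟨?_, ?_, ?_⟩
    · intro C hC
      rcases Finset.mem_insert.1 hC with h | h
      · subst h; exact hn₁.mono Set.subset_union_left
      · exact hPne _ (hRsub _ h)
    · apply Set.eq_of_subset_of_subset
      · intro y hy
        obtain ⟨C, hC, hyC⟩ := hy
        rcases Finset.mem_insert.1 (by exact_mod_cast hC) with h | h
        · subst h
          rcases hyC with h | h
          · exact hsubA C₁ hC₁ h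
          · exact hsubA C₂ hC₂ h
        · exact hsubA _ (hRsub _ h) hyC
      · intro y hy
        rw [← hPun] at hy
        obtain ⟨C, hC, hyC⟩ := hy
        have hCP : C ∈ P := by exact_mod_cast hC
        by_cases h1 : C = C₁
        · exact ⟨C₁ ∪ C₂, by simp [hQ], Or.inl (h1 ▸ hyC)⟩
        by_cases h2 : C = C₂
        · exact ⟨C₁ ∪ C₂, by simp [hQ], Or.inr (h2 ▸ hyC)⟩
        · refine ⟨C, ?_, hyC⟩
          have : C ∈ R := Finset.mem_erase.2 ⟨h2, Finset.mem_erase.2 ⟨h1, hCP⟩⟩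
          simp [hQ, this]
    · intro D hD E hE hDE
      have hD' : D ∈ Q := by exact_mod_cast hD
      have hE' : E ∈ Q := by exact_mod_cast hE
      have key : ∀ F ∈ R, Disjoint (id (C₁ ∪ C₂)) (id F) := by
        intro F hF
        have d1 : Disjoint (id C₁) (id F) := hPdisj hC₁ (hRsub _ hF) (Ne.symm (hRne1 _ hF))
        have d2 : Disjoint (id C₂) (id F) := hPdisj hC₂ (hRsub _ hF) (Ne.symm (hRne2 _ hF))
        simpa [id] using Set.disjoint_union_left.2 ⟨d1, d2⟩
      rcases Finset.mem_insert.1 hD' with hD1 | hD1 <;>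
        rcases Finset.mem_insert.1 hE' with hE1 | hE1
      · exact absurd (hD1.trans hE1.symm) hDE
      · exact hD1 ▸ key E hE1
      · exact (hE1 ▸ key D hD1).symm
      · exact hPdisj (hRsub _ hD1) (hRsub _ hE1) hDE
  -- cardinalities
  have hcard2 : 2 ≤ P.card := Finset.one_lt_card.2 ⟨C₁, hC₁, C₂, hC₂, hne⟩
  have hcardR : R.card = P.card - 2 := by
    rw [hR, Finset.card_erase_of_mem hC₂e, Finset.card_erase_of_mem hC₁]
    omega
  have hcardQ : Q.card = P.card - 1 := by
    rw [hQ, Finset.card_insert_of_notMem hUnotR, hcardR]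
    omega
  have hcardQR : (Q.card : ℝ) = (P.card : ℝ) - 1 := by
    rw [hcardQ, Nat.cast_sub (by omega)]
    simp
  -- sums of perimeters
  have hsumP : ∑ C ∈ P, perim C = perim C₁ + (perim C₂ + ∑ C ∈ R, perim C) := by
    rw [hR, Finset.add_sum_erase _ _ hC₂e, Finset.add_sum_erase _ _ hC₁]
  have hsumQ : ∑ C ∈ Q, perim C = perim (C₁ ∪ C₂) + ∑ C ∈ R, perim C :=
    Finset.sum_insert hUnotR
  have hperim : perim (C₁ ∪ C₂) ≤ perim C₁ + perim C₂ :=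
    perim_union_le hf₁ hf₂ hn₁ hn₂ hx₁ hx₂
  have hcost : cost η Q < cost η P := by
    unfold cost
    rw [hsumQ, hsumP, hcardQR]
    nlinarith
  exact absurd (hopt Q hQpart) (not_le.2 hcost)

end
end

section
/- Let η > 0 and let A, B be two finite nonempty sets of points in ℝ² that are both indivisible for η. If the convex hulls of A and B intersect, i.e. convexHull(A) ∩ convexHull(B) ≠ ∅, then the set A ∪ B is indivisible for η. -/
noncomputable section

noncomputable def spf (S : Set Plane) (θ : ℝ) : ℝ :=
  sSup ((fun p : Plane => p 0 * Real.cos θ + p 1 * Real.sin θ) '' S)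

lemma perim_eq_spf (S : Set Plane) :
    perim S = ∫ θ in (0:ℝ)..(2 * Real.pi), spf S θ := rfl

lemma isLinearMap_dir (θ : ℝ) :
    IsLinearMap ℝ (fun p : Plane => p 0 * Real.cos θ + p 1 * Real.sin θ) := by
  constructor
  · intro p q; simp [PiLp.add_apply]; ring
  · intro c p; simp [PiLp.smul_apply, smul_eq_mul]; ring

lemma dir_le_spf {S : Set Plane} (hS : S.Finite) (θ : ℝ) {p : Plane}
    (hp : p ∈ convexHull ℝ S) :
    p 0 * Real.cos θ + p 1 * Real.sin θ ≤ spf S θ := by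
  have hsub : S ⊆ {q : Plane | q 0 * Real.cos θ + q 1 * Real.sin θ ≤ spf S θ} := by
    intro a ha
    exact le_csSup ((hS.image (fun p : Plane => p 0 * Real.cos θ + p 1 * Real.sin θ)).bddAbove)
      (Set.mem_image_of_mem (fun p : Plane => p 0 * Real.cos θ + p 1 * Real.sin θ) ha)
  exact convexHull_min hsub (convex_halfSpace_le (isLinearMap_dir θ) _) hp

lemma spf_le_spf {S C : Set Plane} (hC : C.Finite) (hS : S.Nonempty)
    (h : S ⊆ convexHull ℝ C) (θ : ℝ) : spf S θ ≤ spf C θ := by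
  apply csSup_le (hS.image _)
  rintro y ⟨p, hp, rfl⟩
  exact dir_le_spf hC θ (h hp)

lemma spf_sUnion_image (T : Finset (Set Plane)) (hT : T.Nonempty)
    (X : Set Plane → Set Plane) (hXfin : ∀ C ∈ T, (X C).Finite)
    (hXne : ∀ C ∈ T, (X C).Nonempty) (θ : ℝ) :
    spf (⋃₀ (X '' (T : Set (Set Plane)))) θ = T.sup' hT (fun C => spf (X C) θ) := by
  have hbigfin : (⋃₀ (X '' (T : Set (Set Plane)))).Finite := by
    apply Set.Finite.sUnion (T.finite_toSet.image X)
    rintro s ⟨C, hC, rfl⟩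
    exact hXfin C hC
  apply le_antisymm
  · apply csSup_le
    · obtain ⟨C₀, hC₀⟩ := hT
      exact ((hXne C₀ hC₀).mono
        (Set.subset_sUnion_of_mem (Set.mem_image_of_mem X (by simpa using hC₀)))).image _
    · rintro y ⟨p, hp, rfl⟩
      obtain ⟨s, ⟨C, hC, rfl⟩, hps⟩ := hp
      have hCT : C ∈ T := by simpa using hC
      calc p 0 * Real.cos θ + p 1 * Real.sin θ ≤ spf (X C) θ :=
            le_csSup (((hXfin C hCT).image _).bddAbove) (Set.mem_image_of_mem _ hps)
        _ ≤ _ := Finset.le_sup' (fun C => spf (X C) θ) hCT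
  · apply Finset.sup'_le
    intro C hC
    apply csSup_le_csSup (hbigfin.image _).bddAbove ((hXne C hC).image _)
    exact Set.image_mono
      (Set.subset_sUnion_of_mem (Set.mem_image_of_mem X (by simpa using hC)))

lemma spf_sUnion (T : Finset (Set Plane)) (hT : T.Nonempty)
    (hfin : ∀ C ∈ T, C.Finite) (hne : ∀ C ∈ T, C.Nonempty) (θ : ℝ) :
    spf (⋃₀ (T : Set (Set Plane))) θ = T.sup' hT (fun C => spf C θ) := by
  have := spf_sUnion_image T hT id hfin hne θ
  simpa using this

lemma continuous_finset_sup'' {ι : Type*} (T : Finset ι) :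
    ∀ (hT : T.Nonempty) (w : ι → ℝ → ℝ), (∀ i ∈ T, Continuous (w i)) →
      Continuous fun θ => T.sup' hT fun i => w i θ := by
  induction T using Finset.cons_induction with
  | empty => intro hT; simp at hT
  | cons a s ha ih =>
    intro hT w hw
    rcases s.eq_empty_or_nonempty with rfl | hs
    · simpa using hw a (by simp)
    · simp only [Finset.sup'_cons hs]
      exact (hw a (by simp)).sup (ih hs w fun i hi => hw i (by simp [hi]))

lemma continuous_spf (S : Set Plane) (hfin : S.Finite) (hne : S.Nonempty) :
    Continuous (spf S) := by
  have hsne : hfin.toFinset.Nonempty := by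
    obtain ⟨a, ha⟩ := hne; exact ⟨a, hfin.mem_toFinset.2 ha⟩
  have hrw : spf S = fun θ => hfin.toFinset.sup' hsne
      (fun p => p 0 * Real.cos θ + p 1 * Real.sin θ) := by
    funext θ
    rw [spf]
    conv_lhs => rw [← hfin.coe_toFinset]
    exact (Finset.sup'_eq_csSup_image _ hsne _).symm
  rw [hrw]
  exact continuous_finset_sup'' _ hsne _ (fun p _ =>
    (continuous_const.mul Real.continuous_cos).add (continuous_const.mul Real.continuous_sin))

lemma intInt_spf (S : Set Plane) (hfin : S.Finite) (hne : S.Nonempty) :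
    IntervalIntegrable (spf S) MeasureTheory.volume 0 (2 * Real.pi) :=
  (continuous_spf S hfin hne).intervalIntegrable 0 (2 * Real.pi)

lemma sup'_sum_aux {ι : Type*} (T : Finset ι) (hT : T.Nonempty) (u v : ι → ℝ)
    (h : ∀ i ∈ T, u i ≤ v i) :
    T.sup' hT v + ∑ i ∈ T, u i ≤ T.sup' hT u + ∑ i ∈ T, v i := by
  classical
  obtain ⟨j, hj, hje⟩ := Finset.exists_mem_eq_sup' hT v
  have h1 : u j ≤ T.sup' hT u := Finset.le_sup' u hj
  have h2 : ∑ i ∈ T.erase j, u i ≤ ∑ i ∈ T.erase j, v i :=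
    Finset.sum_le_sum fun i hi => h i (Finset.mem_of_mem_erase hi)
  have h3 : u j + ∑ i ∈ T.erase j, u i = ∑ i ∈ T, u i := Finset.add_sum_erase T u hj
  have h4 : v j + ∑ i ∈ T.erase j, v i = ∑ i ∈ T, v i := Finset.add_sum_erase T v hj
  linarith [hje]

lemma key_ineq (T : Finset (Set Plane)) (hT : T.Nonempty)
    (hfin : ∀ C ∈ T, C.Finite) (hne : ∀ C ∈ T, C.Nonempty)
    (X : Set Plane → Set Plane) (hXfin : ∀ C ∈ T, (X C).Finite)
    (hXne : ∀ C ∈ T, (X C).Nonempty) (hhull : ∀ C ∈ T, X C ⊆ convexHull ℝ C) :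
    perim (⋃₀ (T : Set (Set Plane))) + ∑ C ∈ T, perim (X C) ≤
      perim (⋃₀ (X '' (T : Set (Set Plane)))) + ∑ C ∈ T, perim C := by
  have hcont1 : Continuous fun θ => T.sup' hT fun C => spf C θ :=
    continuous_finset_sup'' T hT _ fun C hC => continuous_spf C (hfin C hC) (hne C hC)
  have hcont2 : Continuous fun θ => T.sup' hT fun C => spf (X C) θ :=
    continuous_finset_sup'' T hT _ fun C hC => continuous_spf _ (hXfin C hC) (hXne C hC)
  have hcont3 : Continuous fun θ => ∑ C ∈ T, spf C θ :=
    continuous_finset_sum T fun C hC => continuous_spf C (hfin C hC) (hne C hC)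
  have hcont4 : Continuous fun θ => ∑ C ∈ T, spf (X C) θ :=
    continuous_finset_sum T fun C hC => continuous_spf _ (hXfin C hC) (hXne C hC)
  have e1 : perim (⋃₀ (T : Set (Set Plane))) =
      ∫ θ in (0:ℝ)..(2*Real.pi), T.sup' hT fun C => spf C θ := by
    rw [perim_eq_spf]
    exact intervalIntegral.integral_congr fun θ _ => spf_sUnion T hT hfin hne θ
  have e2 : perim (⋃₀ (X '' (T : Set (Set Plane)))) =
      ∫ θ in (0:ℝ)..(2*Real.pi), T.sup' hT fun C => spf (X C) θ := by
    rw [perim_eq_spf]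
    exact intervalIntegral.integral_congr fun θ _ => spf_sUnion_image T hT X hXfin hXne θ
  have e3 : ∑ C ∈ T, perim (X C) = ∫ θ in (0:ℝ)..(2*Real.pi), ∑ C ∈ T, spf (X C) θ := by
    simp only [perim_eq_spf]
    exact (intervalIntegral.integral_finset_sum fun C hC =>
      intInt_spf _ (hXfin C hC) (hXne C hC)).symm
  have e4 : ∑ C ∈ T, perim C = ∫ θ in (0:ℝ)..(2*Real.pi), ∑ C ∈ T, spf C θ := by
    simp only [perim_eq_spf]
    exact (intervalIntegral.integral_finset_sum fun C hC =>
      intInt_spf _ (hfin C hC) (hne C hC)).symm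
  rw [e1, e2, e3, e4,
    ← intervalIntegral.integral_add (hcont1.intervalIntegrable _ _) (hcont4.intervalIntegrable _ _),
    ← intervalIntegral.integral_add (hcont2.intervalIntegrable _ _) (hcont3.intervalIntegrable _ _)]
  apply intervalIntegral.integral_mono_on (by linarith [Real.pi_pos])
    ((hcont1.add hcont4).intervalIntegrable _ _) ((hcont2.add hcont3).intervalIntegrable _ _)
  intro θ _
  exact sup'_sum_aux T hT (fun C => spf (X C) θ) (fun C => spf C θ)
    (fun C hC => spf_le_spf (hfin C hC) (hXne C hC) (hhull C hC) θ)

lemma perim_singleton (x : Plane) : perim ({x} : Set Plane) = 0 := by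
  have h : ∀ θ ∈ Set.uIcc (0:ℝ) (2*Real.pi),
      spf {x} θ = x 0 * Real.cos θ + x 1 * Real.sin θ := by
    intro θ _; rw [spf, Set.image_singleton, csSup_singleton]
  rw [perim_eq_spf, intervalIntegral.integral_congr h,
    intervalIntegral.integral_add
      ((show Continuous fun θ : ℝ => x 0 * Real.cos θ from continuous_const.mul Real.continuous_cos).intervalIntegrable _ _)
      ((show Continuous fun θ : ℝ => x 1 * Real.sin θ from continuous_const.mul Real.continuous_sin).intervalIntegrable _ _),
    intervalIntegral.integral_const_mul, intervalIntegral.integral_const_mul,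
    integral_cos, integral_sin]
  simp
lemma replace_lemma (η : ℝ) (hη : 0 ≤ η) (E : Set Plane)
    (Q D : Finset (Set Plane)) (hQ : IsPartition E Q) (hD : D ⊆ Q) (h2 : 2 ≤ D.card)
    (hperim : perim (⋃₀ (D : Set (Set Plane))) ≤
      (∑ C ∈ D, perim C) + ((D.card : ℝ) - 1) * η) :
    ∃ R : Finset (Set Plane), IsPartition E R ∧ R.card < Q.card ∧ cost η R ≤ cost η Q := by
  classical
  have hDne : D.Nonempty := Finset.card_pos.1 (by omega)
  obtain ⟨C₀, hC₀⟩ := hDne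
  set U := ⋃₀ (D : Set (Set Plane)) with hU
  have hC₀Q : C₀ ∈ Q := hD hC₀
  have hC₀ne : C₀.Nonempty := hQ.1 _ hC₀Q
  have hC₀U : C₀ ⊆ U := Set.subset_sUnion_of_mem (by simpa using hC₀)
  have hUne : U.Nonempty := hC₀ne.mono hC₀U
  have hUnotin : U ∉ Q \ D := by
    intro hmem
    obtain ⟨hUQ, hUD⟩ := Finset.mem_sdiff.1 hmem
    have hne : C₀ ≠ U := fun h => hUD (h ▸ hC₀)
    have hdisj : Disjoint C₀ U := hQ.2.2 (by simpa using hC₀Q) (by simpa using hUQ) hne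
    exact hC₀ne.ne_empty (by
      have h' := Set.disjoint_iff_inter_eq_empty.1 hdisj
      rwa [Set.inter_eq_left.2 hC₀U] at h')
  have hcardle : D.card ≤ Q.card := Finset.card_le_card hD
  refine ⟨insert U (Q \ D), ⟨?_, ?_, ?_⟩, ?_, ?_⟩
  · intro C hC
    rcases Finset.mem_insert.1 hC with rfl | hC
    · exact hUne
    · exact hQ.1 _ (Finset.mem_sdiff.1 hC).1
  · rw [Finset.coe_insert, Set.sUnion_insert, Finset.coe_sdiff, hU, ← Set.sUnion_union,
      Set.union_diff_cancel (Finset.coe_subset.2 hD)]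
    exact hQ.2.1
  · rw [Finset.coe_insert]
    apply Set.PairwiseDisjoint.insert
    · exact hQ.2.2.subset (by rw [Finset.coe_sdiff]; exact Set.diff_subset)
    · intro C hC hne
      have hC' : C ∈ (Q : Set (Set Plane)) \ (D : Set (Set Plane)) := by
        rwa [Finset.coe_sdiff] at hC
      show Disjoint U C
      rw [hU]
      apply Set.disjoint_sUnion_left.2
      intro C' hC'mem
      have hne' : C' ≠ C := fun h => hC'.2 (h ▸ hC'mem)
      exact hQ.2.2 (Finset.coe_subset.2 hD hC'mem) hC'.1 hne'
  · rw [Finset.card_insert_of_notMem hUnotin, Finset.card_sdiff_of_subset hD]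
    omega
  · rw [cost, cost, Finset.sum_insert hUnotin, Finset.card_insert_of_notMem hUnotin,
      Finset.card_sdiff_of_subset hD]
    have hsplit : ∑ C ∈ Q \ D, perim C + ∑ C ∈ D, perim C = ∑ C ∈ Q, perim C :=
      Finset.sum_sdiff hD
    have hcast : ((Q.card - D.card + 1 : ℕ) : ℝ) = (Q.card : ℝ) - (D.card : ℝ) + 1 := by
      rw [Nat.cast_add, Nat.cast_sub hcardle, Nat.cast_one]
    rw [hcast]
    have hring : η * ((Q.card : ℝ) - (D.card : ℝ) + 1) + ((D.card : ℝ) - 1) * η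
        = η * (Q.card : ℝ) := by ring
    linarith [hperim, hsplit, hring]

lemma cover_lemma (η : ℝ) (A E : Set Plane) (hE : E.Finite) (hAne : A.Nonempty)
    (hAE : A ⊆ E) (hAind : Indivisible η A) (Q : Finset (Set Plane)) (hQ : IsPartition E Q)
    (D : Finset (Set Plane)) (hD : ∀ C, C ∈ D ↔ C ∈ Q ∧ (C ∩ A).Nonempty) :
    perim (⋃₀ (D : Set (Set Plane))) ≤ (∑ C ∈ D, perim C) + ((D.card : ℝ) - 1) * η := by
  classical
  obtain ⟨hApart, hAopt⟩ := hAind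
  have hDQ : D ⊆ Q := fun C hC => ((hD C).1 hC).1
  have hfinQ : ∀ C ∈ Q, C.Finite := fun C hC => by
    apply hE.subset
    rw [← hQ.2.1]
    exact Set.subset_sUnion_of_mem (by simpa using hC)
  have hneQ : ∀ C ∈ Q, C.Nonempty := hQ.1
  have hDne : D.Nonempty := by
    obtain ⟨a, ha⟩ := hAne
    have ha' : a ∈ ⋃₀ (Q : Set (Set Plane)) := by rw [hQ.2.1]; exact hAE ha
    obtain ⟨C, hC, haC⟩ := ha'
    exact ⟨C, (hD C).2 ⟨by simpa using hC, ⟨a, haC, ha⟩⟩⟩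
  have hUA : ⋃₀ ((fun C => C ∩ A) '' (D : Set (Set Plane))) = A := by
    apply Set.Subset.antisymm
    · rintro a ⟨s, ⟨C, hC, rfl⟩, ha⟩
      exact ha.2
    · intro a ha
      have ha' : a ∈ ⋃₀ (Q : Set (Set Plane)) := by rw [hQ.2.1]; exact hAE ha
      obtain ⟨C, hC, haC⟩ := ha'
      have hCD : C ∈ D := (hD C).2 ⟨by simpa using hC, ⟨a, haC, ha⟩⟩
      exact ⟨C ∩ A, ⟨C, by simpa using hCD, rfl⟩, haC, ha⟩
  have hinj : Set.InjOn (fun C => C ∩ A) (D : Set (Set Plane)) := by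
    intro C₁ h₁ C₂ h₂ heq
    by_contra hne'
    have hdisj : Disjoint C₁ C₂ := hQ.2.2 (Finset.coe_subset.2 hDQ h₁)
      (Finset.coe_subset.2 hDQ h₂) hne'
    have hne1 : (C₁ ∩ A).Nonempty := ((hD C₁).1 (by simpa using h₁)).2
    obtain ⟨a, ha⟩ := hne1
    have heq' : C₁ ∩ A = C₂ ∩ A := heq
    have ha2 : a ∈ C₂ ∩ A := by rw [← heq']; exact ha
    exact Set.disjoint_left.1 hdisj ha.1 ha2.1
  have hT'part : IsPartition A (D.image fun C => C ∩ A) := by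
    refine ⟨?_, ?_, ?_⟩
    · intro C hC
      obtain ⟨C₀, hC₀, rfl⟩ := Finset.mem_image.1 hC
      exact ((hD C₀).1 hC₀).2
    · rw [Finset.coe_image]; exact hUA
    · rw [Finset.coe_image]
      rintro _ ⟨C₁, h₁, rfl⟩ _ ⟨C₂, h₂, rfl⟩ hne'
      have hC12 : C₁ ≠ C₂ := fun h => hne' (by rw [h])
      have hdisj : Disjoint C₁ C₂ := hQ.2.2 (Finset.coe_subset.2 hDQ h₁)
        (Finset.coe_subset.2 hDQ h₂) hC12
      exact hdisj.mono Set.inter_subset_left Set.inter_subset_left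
  have hcard : (D.image fun C => C ∩ A).card = D.card :=
    Finset.card_image_of_injOn hinj
  have hsum : ∑ C' ∈ D.image (fun C => C ∩ A), perim C' = ∑ C ∈ D, perim (C ∩ A) :=
    Finset.sum_image fun x hx y hy h => hinj (by simpa using hx) (by simpa using hy) h
  have hopt := hAopt _ hT'part
  rw [cost, cost, Finset.card_singleton, Finset.sum_singleton, hcard, hsum] at hopt
  have hkey := key_ineq D hDne (fun C hC => hfinQ C (hDQ hC)) (fun C hC => hneQ C (hDQ hC))
    (fun C => C ∩ A) (fun C hC => (hfinQ C (hDQ hC)).subset Set.inter_subset_left)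
    (fun C hC => ((hD C).1 hC).2)
    (fun C hC => Set.inter_subset_left.trans (subset_convexHull ℝ C))
  rw [hUA] at hkey
  have hr : η * ((D.card : ℝ)) - η * 1 = ((D.card : ℝ) - 1) * η := by ring
  push_cast at hopt
  linarith [hopt, hkey, hr]

lemma pair_perim (C₁ C₂ : Set Plane) (h₁f : C₁.Finite) (h₂f : C₂.Finite)
    (h₁ne : C₁.Nonempty) (h₂ne : C₂.Nonempty) (hne : C₁ ≠ C₂) (x : Plane)
    (hx₁ : x ∈ convexHull ℝ C₁) (hx₂ : x ∈ convexHull ℝ C₂) :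
    perim (C₁ ∪ C₂) ≤ perim C₁ + perim C₂ := by
  classical
  have hTne : ({C₁, C₂} : Finset (Set Plane)).Nonempty := ⟨C₁, by simp⟩
  have hkey := key_ineq {C₁, C₂} hTne
    (by intro C hC
        rcases Finset.mem_insert.1 hC with rfl | hC
        · exact h₁f
        · rw [Finset.mem_singleton.1 hC]; exact h₂f)
    (by intro C hC
        rcases Finset.mem_insert.1 hC with rfl | hC
        · exact h₁ne
        · rw [Finset.mem_singleton.1 hC]; exact h₂ne)
    (fun _ => ({x} : Set Plane)) (fun C _ => Set.finite_singleton x)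
    (fun C _ => Set.singleton_nonempty x)
    (by intro C hC
        rcases Finset.mem_insert.1 hC with rfl | hC
        · exact Set.singleton_subset_iff.2 hx₁
        · rw [Finset.mem_singleton.1 hC]; exact Set.singleton_subset_iff.2 hx₂)
  have h1 : ⋃₀ (({C₁, C₂} : Finset (Set Plane)) : Set (Set Plane)) = C₁ ∪ C₂ := by simp
  have h2 : ⋃₀ ((fun _ => ({x} : Set Plane)) ''
      (({C₁, C₂} : Finset (Set Plane)) : Set (Set Plane))) = ({x} : Set Plane) := by
    rw [Set.Nonempty.image_const (by exact ⟨C₁, by simp⟩) ({x} : Set Plane),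
      Set.sUnion_singleton]
  rw [h1, h2, Finset.sum_pair hne, Finset.sum_pair hne, perim_singleton] at hkey
  linarith

/-- the union of two indivisible sets with intersecting convex hulls
is indivisible. -/
theorem union_indivisible_of_hulls_intersect
    (η : ℝ) (hη : 0 < η)
    (A B : Set Plane) (hA : A.Finite) (hAne : A.Nonempty)
    (hB : B.Finite) (hBne : B.Nonempty)
    (hAind : Indivisible η A) (hBind : Indivisible η B)
    (hint : (convexHull ℝ A ∩ convexHull ℝ B).Nonempty) :
    Indivisible η (A ∪ B) := by
  classical
  have hEfin : (A ∪ B).Finite := hA.union hB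
  have hEne : (A ∪ B).Nonempty := hAne.inl
  refine ⟨⟨?_, ?_, ?_⟩, ?_⟩
  · intro C hC; rw [Finset.mem_singleton.1 hC]; exact hEne
  · simp
  · simp
  · intro Q₀ hQ₀
    suffices H : ∀ n (Q : Finset (Set Plane)), IsPartition (A ∪ B) Q → Q.card ≤ n →
        cost η {A ∪ B} ≤ cost η Q from H Q₀.card Q₀ hQ₀ le_rfl
    intro n
    induction n with
    | zero =>
      intro Q hQ hc
      exfalso
      have hQe : Q = ∅ := Finset.card_eq_zero.1 (Nat.le_zero.1 hc)
      rw [hQe] at hQ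
      have h0 := hQ.2.1
      simp only [Finset.coe_empty, Set.sUnion_empty] at h0
      exact hEne.ne_empty h0.symm
    | succ n ih =>
      intro Q hQ hcard
      have hsubQ : ∀ C ∈ Q, C ⊆ A ∪ B := fun C hC => by
        rw [← hQ.2.1]; exact Set.subset_sUnion_of_mem (by simpa using hC)
      have hfinQ : ∀ C ∈ Q, C.Finite := fun C hC => hEfin.subset (hsubQ C hC)
      set DA := Q.filter (fun C => (C ∩ A).Nonempty) with hDAdef
      set DB := Q.filter (fun C => (C ∩ B).Nonempty) with hDBdef
      have hDAspec : ∀ C, C ∈ DA ↔ C ∈ Q ∧ (C ∩ A).Nonempty := fun C => by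
        rw [hDAdef]; exact Finset.mem_filter
      have hDBspec : ∀ C, C ∈ DB ↔ C ∈ Q ∧ (C ∩ B).Nonempty := fun C => by
        rw [hDBdef]; exact Finset.mem_filter
      have hDAne : DA.Nonempty := by
        obtain ⟨a, ha⟩ := hAne
        have ha' : a ∈ ⋃₀ (Q : Set (Set Plane)) := by rw [hQ.2.1]; exact Or.inl ha
        obtain ⟨C, hC, haC⟩ := ha'
        exact ⟨C, (hDAspec C).2 ⟨by simpa using hC, ⟨a, haC, ha⟩⟩⟩
      have hDBne : DB.Nonempty := by
        obtain ⟨b, hb⟩ := hBne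
        have hb' : b ∈ ⋃₀ (Q : Set (Set Plane)) := by rw [hQ.2.1]; exact Or.inr hb
        obtain ⟨C, hC, hbC⟩ := hb'
        exact ⟨C, (hDBspec C).2 ⟨by simpa using hC, ⟨b, hbC, hb⟩⟩⟩
      by_cases h2A : 2 ≤ DA.card
      · have hperim := cover_lemma η A (A ∪ B) hEfin hAne Set.subset_union_left hAind
          Q hQ DA hDAspec
        obtain ⟨R, hR1, hR2, hR3⟩ := replace_lemma η hη.le (A ∪ B) Q DA hQ
          (by rw [hDAdef]; exact Finset.filter_subset _ _) h2A hperim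
        exact (ih R hR1 (by omega)).trans hR3
      · by_cases h2B : 2 ≤ DB.card
        · have hperim := cover_lemma η B (A ∪ B) hEfin hBne Set.subset_union_right hBind
            Q hQ DB hDBspec
          obtain ⟨R, hR1, hR2, hR3⟩ := replace_lemma η hη.le (A ∪ B) Q DB hQ
            (by rw [hDBdef]; exact Finset.filter_subset _ _) h2B hperim
          exact (ih R hR1 (by omega)).trans hR3
        · have hA1 : DA.card = 1 := by
            have := Finset.card_pos.2 hDAne; omega
          have hB1 : DB.card = 1 := by
            have := Finset.card_pos.2 hDBne; omega
          obtain ⟨CA, hCAeq⟩ := Finset.card_eq_one.1 hA1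
          obtain ⟨CB, hCBeq⟩ := Finset.card_eq_one.1 hB1
          have hCAQ : CA ∈ Q :=
            ((hDAspec CA).1 (by rw [hCAeq]; exact Finset.mem_singleton_self CA)).1
          have hCBQ : CB ∈ Q :=
            ((hDBspec CB).1 (by rw [hCBeq]; exact Finset.mem_singleton_self CB)).1
          have hAsub : A ⊆ CA := by
            intro a ha
            have ha' : a ∈ ⋃₀ (Q : Set (Set Plane)) := by rw [hQ.2.1]; exact Or.inl ha
            obtain ⟨C, hC, haC⟩ := ha'
            have hCDA : C ∈ DA := (hDAspec C).2 ⟨by simpa using hC, ⟨a, haC, ha⟩⟩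
            rw [hCAeq, Finset.mem_singleton] at hCDA
            rwa [← hCDA]
          have hBsub : B ⊆ CB := by
            intro b hb
            have hb' : b ∈ ⋃₀ (Q : Set (Set Plane)) := by rw [hQ.2.1]; exact Or.inr hb
            obtain ⟨C, hC, hbC⟩ := hb'
            have hCDB : C ∈ DB := (hDBspec C).2 ⟨by simpa using hC, ⟨b, hbC, hb⟩⟩
            rw [hCBeq, Finset.mem_singleton] at hCDB
            rwa [← hCDB]
          by_cases hCC : CA = CB
          · have hCAE : CA = A ∪ B := by
              apply Set.Subset.antisymm (hsubQ CA hCAQ)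
              exact Set.union_subset hAsub (hCC ▸ hBsub)
            have hQsingle : Q = {A ∪ B} := by
              apply Finset.eq_singleton_iff_unique_mem.2
              refine ⟨hCAE ▸ hCAQ, ?_⟩
              intro C hC
              by_contra hneC
              have hCne : C ≠ CA := by rw [hCAE]; exact hneC
              have hdisj : Disjoint C CA := hQ.2.2 (by simpa using hC)
                (by simpa using hCAQ) hCne
              obtain ⟨c, hc⟩ := hQ.1 C hC
              have hcE : c ∈ CA := by rw [hCAE]; exact hsubQ C hC hc
              exact Set.disjoint_left.1 hdisj hc hcE
            rw [hQsingle]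
          · obtain ⟨x, hxA, hxB⟩ := hint
            have hxCA : x ∈ convexHull ℝ CA := convexHull_mono hAsub hxA
            have hxCB : x ∈ convexHull ℝ CB := convexHull_mono hBsub hxB
            have hpair := pair_perim CA CB (hfinQ CA hCAQ) (hfinQ CB hCBQ)
              (hQ.1 CA hCAQ) (hQ.1 CB hCBQ) hCC x hxCA hxCB
            have hDsub : ({CA, CB} : Finset (Set Plane)) ⊆ Q := by
              intro C hC
              rcases Finset.mem_insert.1 hC with rfl | hC
              · exact hCAQ
              · rw [Finset.mem_singleton.1 hC]; exact hCBQ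
            have hcard2 : ({CA, CB} : Finset (Set Plane)).card = 2 := by
              rw [Finset.card_insert_of_notMem (by simpa using hCC), Finset.card_singleton]
            have hperim2 : perim (⋃₀ (({CA, CB} : Finset (Set Plane)) : Set (Set Plane))) ≤
                (∑ C ∈ ({CA, CB} : Finset (Set Plane)), perim C) +
                  (((({CA, CB} : Finset (Set Plane)).card : ℕ) : ℝ) - 1) * η := by
              rw [hcard2, Finset.sum_pair hCC]
              have h1 : ⋃₀ (({CA, CB} : Finset (Set Plane)) : Set (Set Plane)) = CA ∪ CB := by
                simp
              rw [h1]
              push_cast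
              linarith [hpair, hη.le]
            obtain ⟨R, hR1, hR2, hR3⟩ := replace_lemma η hη.le (A ∪ B) Q {CA, CB} hQ hDsub
              (by rw [hcard2]) hperim2
            exact (ih R hR1 (by omega)).trans hR3

end
end

section
/- Let η > 0, let A ⊆ B be finite sets of points in ℝ² with A nonempty, and suppose A is indivisible for η. If 𝒞 is a maximal optimal partition of (B, η), then there is a cluster C ∈ 𝒞 with A ⊆ C. -/
noncomputable section

/-! ### Auxiliary lemmas -/

/-- The support-type function appearing in Cauchy's formula. -/
noncomputable def sfn (C : Set Plane) (θ : ℝ) : ℝ :=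
  sSup ((fun p : Plane => p 0 * Real.cos θ + p 1 * Real.sin θ) '' C)

lemma perim_eq (C : Set Plane) : perim C = ∫ θ in (0:ℝ)..(2 * Real.pi), sfn C θ := rfl

lemma sfn_eq_sup' {C : Set Plane} (hC : C.Finite) (hne : C.Nonempty) (θ : ℝ) :
    sfn C θ = hC.toFinset.sup' (by simpa using hne)
      (fun p => p 0 * Real.cos θ + p 1 * Real.sin θ) := by
  rw [sfn, Finset.sup'_eq_csSup_image, Set.Finite.coe_toFinset]

lemma cont_sfn {C : Set Plane} (hC : C.Finite) (hne : C.Nonempty) :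
    Continuous (sfn C) := by
  have h : sfn C = fun θ => hC.toFinset.sup' (by simpa using hne)
      ((fun p : Plane => fun θ => p 0 * Real.cos θ + p 1 * Real.sin θ) · θ) :=
    funext fun θ => sfn_eq_sup' hC hne θ
  rw [h]
  exact Continuous.finset_sup'_apply _ (fun p _ => by fun_prop)

lemma intg_sfn {C : Set Plane} (hC : C.Finite) (hne : C.Nonempty) :
    IntervalIntegrable (sfn C) MeasureTheory.volume 0 (2 * Real.pi) :=
  (cont_sfn hC hne).intervalIntegrable _ _

lemma sfn_mono {C D : Set Plane} (hD : D.Finite) (hne : C.Nonempty) (hsub : C ⊆ D) (θ : ℝ) :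
    sfn C θ ≤ sfn D θ :=
  csSup_le_csSup ((hD.image _).bddAbove) (hne.image _) (Set.image_mono hsub)

lemma sfn_union {C D : Set Plane} (hC : C.Finite) (hCne : C.Nonempty)
    (hD : D.Finite) (hDne : D.Nonempty) (θ : ℝ) :
    sfn (C ∪ D) θ = max (sfn C θ) (sfn D θ) := by
  rw [sfn, Set.image_union, csSup_union ((hC.image _).bddAbove) (hCne.image _)
    ((hD.image _).bddAbove) (hDne.image _)]
  rfl

lemma sfn_biUnion {ι : Type*} (s : Finset ι) (hne : s.Nonempty) (f : ι → Set Plane)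
    (hfin : ∀ i ∈ s, (f i).Finite) (hn : ∀ i ∈ s, (f i).Nonempty) (θ : ℝ) :
    sfn (⋃ i ∈ s, f i) θ = s.sup' hne (fun i => sfn (f i) θ) := by
  induction hne using Finset.Nonempty.cons_induction with
  | singleton i => simp
  | cons i s hi hs ih =>
    have h1 : (⋃ j ∈ Finset.cons i s hi, f j) = f i ∪ ⋃ j ∈ s, f j := by
      simp [Set.biUnion_insert]
    have hD : (⋃ j ∈ s, f j).Finite := by
      exact Set.Finite.biUnion s.finite_toSet fun j hj =>
        hfin j (Finset.mem_cons_of_mem (Finset.mem_coe.mp hj))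
    have hDne : (⋃ j ∈ s, f j).Nonempty := by
      obtain ⟨j, hj⟩ := hs
      exact ⟨_, Set.mem_biUnion hj (hn j (Finset.mem_cons_of_mem hj)).some_mem⟩
    rw [h1, sfn_union (hfin i (Finset.mem_cons_self i s)) (hn i (Finset.mem_cons_self i s))
        hD hDne,
      ih (fun j hj => hfin j (Finset.mem_cons_of_mem hj))
        (fun j hj => hn j (Finset.mem_cons_of_mem hj)),
      Finset.sup'_cons]

lemma sup'_sum_ineq {ι : Type*} (s : Finset ι) (hne : s.Nonempty) (m a : ι → ℝ)
    (h : ∀ i ∈ s, a i ≤ m i) :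
    s.sup' hne m + ∑ i ∈ s, a i ≤ s.sup' hne a + ∑ i ∈ s, m i := by
  obtain ⟨i₀, hi₀, hmax⟩ := Finset.exists_mem_eq_sup' hne m
  have h1 : a i₀ ≤ s.sup' hne a := Finset.le_sup' a hi₀
  have h2 : m i₀ - a i₀ ≤ ∑ i ∈ s, (m i - a i) :=
    Finset.single_le_sum (f := fun i => m i - a i)
      (fun i hi => by simpa using sub_nonneg.mpr (h i hi)) hi₀
  rw [Finset.sum_sub_distrib] at h2
  linarith

lemma perim_key (S : Finset (Set Plane)) (hne : S.Nonempty) (A : Set Plane)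
    (hAfin : A.Finite)
    (hfin : ∀ C ∈ S, C.Finite) (hn : ∀ C ∈ S, (C ∩ A).Nonempty)
    (hA : A = ⋃ C ∈ S, (C ∩ A)) :
    perim (⋃ C ∈ S, C) + ∑ C ∈ S, perim (C ∩ A) ≤ perim A + ∑ C ∈ S, perim C := by
  have hnC : ∀ C ∈ S, C.Nonempty := fun C hC => (hn C hC).mono Set.inter_subset_left
  have hAne : A.Nonempty := by
    obtain ⟨C, hC⟩ := hne
    exact ((hn C hC).mono Set.inter_subset_right)
  have hUfin : (⋃ C ∈ S, C).Finite := by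
    exact Set.Finite.biUnion S.finite_toSet fun C hC => hfin C (Finset.mem_coe.mp hC)
  have hUne : (⋃ C ∈ S, C).Nonempty := by
    obtain ⟨C, hC⟩ := hne
    exact ⟨_, Set.mem_biUnion hC (hnC C hC).some_mem⟩
  have hIfin : ∀ C ∈ S, (C ∩ A).Finite := fun C hC => (hfin C hC).inter_of_left A
  have key : ∀ θ ∈ Set.Icc (0:ℝ) (2 * Real.pi),
      sfn (⋃ C ∈ S, C) θ + ∑ C ∈ S, sfn (C ∩ A) θ
        ≤ sfn A θ + ∑ C ∈ S, sfn C θ := by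
    intro θ _
    rw [sfn_biUnion S hne (fun C => C) hfin hnC θ]
    conv_rhs => rw [hA, sfn_biUnion S hne (fun C => C ∩ A) hIfin hn θ]
    exact sup'_sum_ineq S hne _ _ fun C hC =>
      sfn_mono (hfin C hC) (hn C hC) Set.inter_subset_left θ
  have cL : Continuous (fun θ => sfn (⋃ C ∈ S, C) θ + ∑ C ∈ S, sfn (C ∩ A) θ) :=
    (cont_sfn hUfin hUne).add (continuous_finset_sum S fun C hC => cont_sfn (hIfin C hC) (hn C hC))
  have cR : Continuous (fun θ => sfn A θ + ∑ C ∈ S, sfn C θ) :=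
    (cont_sfn hAfin hAne).add (continuous_finset_sum S fun C hC => cont_sfn (hfin C hC) (hnC C hC))
  have hmono := intervalIntegral.integral_mono_on (μ := MeasureTheory.volume)
    (by positivity : (0:ℝ) ≤ 2 * Real.pi)
    (cL.intervalIntegrable _ _) (cR.intervalIntegrable _ _) key
  rw [intervalIntegral.integral_add (intg_sfn hUfin hUne)
        ((continuous_finset_sum S fun C hC => cont_sfn (hIfin C hC) (hn C hC)).intervalIntegrable _ _),
      intervalIntegral.integral_add (intg_sfn hAfin hAne)
        ((continuous_finset_sum S fun C hC => cont_sfn (hfin C hC) (hnC C hC)).intervalIntegrable _ _),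
      intervalIntegral.integral_finset_sum (fun C hC => intg_sfn (hIfin C hC) (hn C hC)),
      intervalIntegral.integral_finset_sum (fun C hC => intg_sfn (hfin C hC) (hnC C hC))] at hmono
  simpa [perim_eq] using hmono

/-- an indivisible subset is contained in a cluster of a maximal
optimal partition. -/
theorem indivisible_subset_contained_in_cluster
    (η : ℝ) (hη : 0 < η)
    (A B : Set Plane) (hAB : A ⊆ B) (hB : B.Finite) (hAne : A.Nonempty)
    (hAind : Indivisible η A)
    (P : Finset (Set Plane)) (hP : IsMaximalOptimal η B P) :
    ∃ C ∈ P, A ⊆ C := by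
  classical
  obtain ⟨⟨⟨hPne, hPunion, hPdisj⟩, hPopt⟩, hPmax⟩ := hP
  have hAfin : A.Finite := hB.subset hAB
  set S : Finset (Set Plane) := P.filter (fun C => (C ∩ A).Nonempty) with hSdef
  have hSsub : S ⊆ P := Finset.filter_subset _ _
  have hmemS : ∀ a ∈ A, ∃ C ∈ S, a ∈ C := by
    intro a ha
    have hm : a ∈ ⋃₀ (P : Set (Set Plane)) := hPunion ▸ hAB ha
    obtain ⟨C, hCP, haC⟩ := hm
    exact ⟨C, Finset.mem_filter.mpr ⟨Finset.mem_coe.mp hCP, ⟨a, haC, ha⟩⟩, haC⟩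
  have hSne : S.Nonempty := by
    obtain ⟨a, ha⟩ := hAne
    obtain ⟨C, hC, _⟩ := hmemS a ha
    exact ⟨C, hC⟩
  by_cases hcard : S.card = 1
  · obtain ⟨C, hC⟩ := Finset.card_eq_one.mp hcard
    refine ⟨C, hSsub (hC ▸ Finset.mem_singleton_self C), fun a ha => ?_⟩
    obtain ⟨D, hD, haD⟩ := hmemS a ha
    rw [hC, Finset.mem_singleton] at hD
    exact hD ▸ haD
  · exfalso
    have h2 : 2 ≤ S.card := by
      have := hSne.card_pos
      omega
    have hle : S.card ≤ P.card := Finset.card_le_card hSsub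
    have hfinP : ∀ C ∈ P, C.Finite := fun C hC =>
      hB.subset (hPunion ▸ Set.subset_sUnion_of_mem (Finset.mem_coe.mpr hC))
    have hnS : ∀ C ∈ S, (C ∩ A).Nonempty := fun C hC => (Finset.mem_filter.mp hC).2
    have hfinS : ∀ C ∈ S, C.Finite := fun C hC => hfinP C (hSsub hC)
    set U : Set Plane := ⋃ C ∈ S, C with hUdef
    have hAsubU : A ⊆ U := by
      intro a ha
      obtain ⟨C, hC, haC⟩ := hmemS a ha
      exact Set.mem_biUnion hC haC
    have hAU : A = ⋃ C ∈ S, (C ∩ A) := by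
      apply Set.Subset.antisymm
      · intro a ha
        obtain ⟨C, hC, haC⟩ := hmemS a ha
        exact Set.mem_biUnion hC ⟨haC, ha⟩
      · intro a ha
        simp only [Set.mem_iUnion] at ha
        obtain ⟨C, _, _, haA⟩ := ha
        exact haA
    have hUne : U.Nonempty := hAne.mono hAsubU
    set Q : Finset (Set Plane) := insert U (P \ S) with hQdef
    have hUnotin : U ∉ P \ S := by
      intro h
      obtain ⟨a, ha⟩ := hAne
      have hUS : U ∈ S := Finset.mem_filter.mpr
        ⟨(Finset.mem_sdiff.mp h).1, ⟨a, hAsubU ha, ha⟩⟩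
      exact (Finset.mem_sdiff.mp h).2 hUS
    -- Q is a partition of B
    have hQne : ∀ C ∈ Q, (C : Set Plane).Nonempty := by
      intro C hC
      rcases Finset.mem_insert.mp hC with h | h
      · exact h ▸ hUne
      · exact hPne C (Finset.mem_sdiff.mp h).1
    have hQunion : ⋃₀ (Q : Set (Set Plane)) = B := by
      apply Set.Subset.antisymm
      · rintro x ⟨C, hC, hxC⟩
        rw [← hPunion]
        rcases Finset.mem_insert.mp (Finset.mem_coe.mp hC) with h | h
        · subst h
          simp only [hUdef, Set.mem_iUnion] at hxC
          obtain ⟨D, hD, hxD⟩ := hxC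
          exact ⟨D, Finset.mem_coe.mpr (hSsub hD), hxD⟩
        · exact ⟨C, Finset.mem_coe.mpr (Finset.mem_sdiff.mp h).1, hxC⟩
      · intro x hx
        rw [← hPunion] at hx
        obtain ⟨C, hC, hxC⟩ := hx
        by_cases hCS : C ∈ S
        · exact ⟨U, Finset.mem_coe.mpr (Finset.mem_insert_self _ _), Set.mem_biUnion hCS hxC⟩
        · exact ⟨C, Finset.mem_coe.mpr (Finset.mem_insert_of_mem
            (Finset.mem_sdiff.mpr ⟨Finset.mem_coe.mp hC, hCS⟩)), hxC⟩
    have hdisjU : ∀ D ∈ P \ S, Disjoint U D := by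
      intro D hD
      rw [Set.disjoint_left]
      intro a haU haD
      simp only [hUdef, Set.mem_iUnion] at haU
      obtain ⟨C, hCS, haC⟩ := haU
      have hne' : C ≠ D := fun h => (Finset.mem_sdiff.mp hD).2 (h ▸ hCS)
      exact Set.disjoint_left.mp
        (hPdisj (Finset.mem_coe.mpr (hSsub hCS))
          (Finset.mem_coe.mpr (Finset.mem_sdiff.mp hD).1) hne') haC haD
    have hQdisj : (Q : Set (Set Plane)).PairwiseDisjoint id := by
      intro x hx y hy hxy
      rcases Finset.mem_insert.mp (Finset.mem_coe.mp hx) with h1 | h1 <;>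
        rcases Finset.mem_insert.mp (Finset.mem_coe.mp hy) with h2 | h2
      · exact absurd (h1.trans h2.symm) hxy
      · exact h1 ▸ (hdisjU y h2)
      · exact h2 ▸ (hdisjU x h1).symm
      · exact hPdisj (Finset.mem_coe.mpr (Finset.mem_sdiff.mp h1).1)
          (Finset.mem_coe.mpr (Finset.mem_sdiff.mp h2).1) hxy
    have hQpart : IsPartition B Q := ⟨hQne, hQunion, hQdisj⟩
    have hQcard : Q.card < P.card := by
      have h3 : Q.card ≤ (P \ S).card + 1 := Finset.card_insert_le _ _
      have h4 : (P \ S).card = P.card - S.card := Finset.card_sdiff_of_subset hSsub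
      omega
    -- the partition R of A induced by S
    have hinj : ∀ C ∈ S, ∀ D ∈ S, C ∩ A = D ∩ A → C = D := by
      intro C hC D hD h
      by_contra hne'
      have hd := hPdisj (Finset.mem_coe.mpr (hSsub hC)) (Finset.mem_coe.mpr (hSsub hD)) hne'
      obtain ⟨a, haC, haA⟩ := hnS C hC
      have hmem : a ∈ C ∩ A := ⟨haC, haA⟩
      rw [h] at hmem
      have haD : a ∈ D := hmem.1
      exact Set.disjoint_left.mp hd haC haD
    set R : Finset (Set Plane) := S.image (fun C => C ∩ A) with hRdef
    have hRpart : IsPartition A R := by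
      refine ⟨?_, ?_, ?_⟩
      · intro C hC
        obtain ⟨D, hD, hDC⟩ := Finset.mem_image.mp hC
        exact hDC ▸ hnS D hD
      · apply Set.Subset.antisymm
        · rintro x ⟨T, hT, hxT⟩
          obtain ⟨C, _, hCT⟩ := Finset.mem_image.mp (Finset.mem_coe.mp hT)
          exact (hCT ▸ hxT).2
        · intro a ha
          obtain ⟨C, hC, haC⟩ := hmemS a ha
          exact ⟨C ∩ A, Finset.mem_coe.mpr (Finset.mem_image_of_mem _ hC), ⟨haC, ha⟩⟩
      · intro x hx y hy hxy
        obtain ⟨C, hC, hCx⟩ := Finset.mem_image.mp (Finset.mem_coe.mp hx)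
        obtain ⟨D, hD, hDy⟩ := Finset.mem_image.mp (Finset.mem_coe.mp hy)
        have hne' : C ≠ D := fun h => hxy (hCx ▸ hDy ▸ h ▸ rfl)
        have hd := hPdisj (Finset.mem_coe.mpr (hSsub hC)) (Finset.mem_coe.mpr (hSsub hD)) hne'
        exact hCx ▸ hDy ▸ (hd.mono Set.inter_subset_left Set.inter_subset_left)
    have hRcard : R.card = S.card := Finset.card_image_of_injOn hinj
    have hRsum : ∑ C ∈ R, perim C = ∑ C ∈ S, perim (C ∩ A) :=
      Finset.sum_image hinj
    -- indivisibility
    have hindiv := hAind.2 R hRpart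
    have hcost1 : cost η ({A} : Finset (Set Plane)) = η + perim A := by
      simp [cost]
    have hcostR : cost η R = η * S.card + ∑ C ∈ S, perim (C ∩ A) := by
      rw [cost, hRcard, hRsum]
    rw [hcost1, hcostR] at hindiv
    -- the perimeter inequality
    have hkey := perim_key S hSne A hAfin hfinS hnS hAU
    -- cost comparison
    have hsum : ∑ C ∈ P \ S, perim C + ∑ C ∈ S, perim C = ∑ C ∈ P, perim C :=
      Finset.sum_sdiff hSsub
    have hcostQ : cost η Q = η * Q.card + perim U + ∑ C ∈ P \ S, perim C := by
      rw [cost, Finset.sum_insert hUnotin]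
      ring
    have hQcardeq : (Q.card : ℝ) ≤ (P.card : ℝ) - S.card + 1 := by
      have h3 : Q.card ≤ (P \ S).card + 1 := Finset.card_insert_le _ _
      have h4 : (P \ S).card = P.card - S.card := Finset.card_sdiff_of_subset hSsub
      have : Q.card ≤ P.card - S.card + 1 := by omega
      calc (Q.card : ℝ) ≤ ((P.card - S.card + 1 : ℕ) : ℝ) := by exact_mod_cast this
        _ = (P.card : ℝ) - S.card + 1 := by
            rw [Nat.cast_add, Nat.cast_sub hle, Nat.cast_one]
    have hQleP : cost η Q ≤ cost η P := by
      rw [hcostQ, cost]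
      rw [← hsum]
      have hcard2 : (2 : ℝ) ≤ (S.card : ℝ) := by exact_mod_cast h2
      nlinarith [mul_le_mul_of_nonneg_left hQcardeq hη.le]
    have hQopt : IsOptimalPartition η B Q :=
      ⟨hQpart, fun Q' hQ' => le_trans hQleP (hPopt Q' hQ')⟩
    exact hPmax ⟨Q, hQopt, hQcard, fun C hC => by
      by_cases hCS : C ∈ S
      · exact ⟨U, Finset.mem_insert_self _ _, fun x hx => Set.mem_biUnion hCS hx⟩
      · exact ⟨C, Finset.mem_insert_of_mem (Finset.mem_sdiff.mpr ⟨hC, hCS⟩), subset_rfl⟩⟩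

end
end

section
/- Let η > 0, let I be a finite nonempty index set, and let A_i ⊆ ℝ² (i ∈ I) be finite sets whose union is A = ⋃_{i∈I} A_i; assume moreover that A = ⋃_{i∈I} A_i^∁, where A_i^∁ := A \ A_i. For each i let 𝒞_i be the maximal optimal partition of (A_i^∁, η), and let 𝒞 be the maximal optimal partition of (A, η). Then any cluster C' ∈ 𝒞_i that has nonempty intersection with a cluster C ∈ 𝒞 satisfies C' ⊆ C; consequently, every cluster C ∈ 𝒞 is a union of clusters of the partitions 𝒞_i (i ∈ I). -/
set_option maxHeartbeats 1000000


noncomputable section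

namespace BigClusterAux

/-- support function value in direction θ -/
noncomputable def sfn (C : Set Plane) (θ : ℝ) : ℝ :=
  sSup ((fun p : Plane => p 0 * Real.cos θ + p 1 * Real.sin θ) '' C)

lemma perim_eq (C : Set Plane) :
    perim C = ∫ θ in (0:ℝ)..(2 * Real.pi), sfn C θ := rfl

lemma sfn_mono {C D : Set Plane} (hD : D.Finite) (hne : C.Nonempty)
    (hsub : C ⊆ D) (θ : ℝ) : sfn C θ ≤ sfn D θ :=
  csSup_le_csSup ((hD.image _).bddAbove) (hne.image _) (Set.image_mono hsub)

lemma continuous_sup' {F : Finset Plane} (hF : F.Nonempty) :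
    Continuous (fun θ : ℝ =>
      F.sup' hF (fun p => p 0 * Real.cos θ + p 1 * Real.sin θ)) := by
  induction hF using Finset.Nonempty.cons_induction with
  | singleton a =>
      simp only [Finset.sup'_singleton]
      exact ((continuous_const.mul Real.continuous_cos).add
        (continuous_const.mul Real.continuous_sin))
  | cons a s ha hs ih =>
      simp only [Finset.sup'_cons hs]
      exact Continuous.max ((continuous_const.mul Real.continuous_cos).add
        (continuous_const.mul Real.continuous_sin)) ih

lemma continuous_sfn {C : Set Plane} (hC : C.Finite) (hne : C.Nonempty) :
    Continuous (sfn C) := by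
  have hFne : hC.toFinset.Nonempty := by
    simpa [Set.Finite.toFinset_nonempty] using hne
  have h : ∀ θ, sfn C θ =
      hC.toFinset.sup' hFne (fun p => p 0 * Real.cos θ + p 1 * Real.sin θ) := by
    intro θ
    rw [Finset.sup'_eq_csSup_image]
    unfold sfn
    congr 1
    rw [Set.Finite.coe_toFinset]
  have : sfn C = fun θ =>
      hC.toFinset.sup' hFne (fun p => p 0 * Real.cos θ + p 1 * Real.sin θ) :=
    funext h
  rw [this]
  exact continuous_sup' hFne

lemma intervalIntegrable_sfn {C : Set Plane} (hC : C.Finite) (hne : C.Nonempty) :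
    IntervalIntegrable (sfn C) MeasureTheory.volume 0 (2 * Real.pi) :=
  (continuous_sfn hC hne).intervalIntegrable _ _

lemma intervalIntegrable_sum (s : Finset (Set Plane)) (f : Set Plane → ℝ → ℝ) :
    (∀ X ∈ s, IntervalIntegrable (f X) MeasureTheory.volume 0 (2 * Real.pi)) →
    IntervalIntegrable (fun θ => ∑ X ∈ s, f X θ)
      MeasureTheory.volume 0 (2 * Real.pi) := by
  classical
  induction s using Finset.induction_on with
  | empty => intro _; simpa using intervalIntegrable_const
  | @insert a t ha ih =>
      intro h
      simp only [Finset.sum_insert ha]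
      exact (h _ (Finset.mem_insert_self _ _)).add
        (ih fun X hX => h X (Finset.mem_insert_of_mem hX))

/-- pointwise key inequality -/
lemma key_pointwise (𝒯 : Finset (Set Plane)) (h𝒯ne : 𝒯.Nonempty)
    (hfin : ∀ X ∈ 𝒯, (X : Set Plane).Finite)
    (hXne : ∀ X ∈ 𝒯, (X : Set Plane).Nonempty)
    (D : Set Plane) (hD : D.Finite) (hDne : D.Nonempty)
    (hDX : ∀ X ∈ 𝒯, (D ∩ X).Nonempty) (θ : ℝ) :
    sfn (⋃₀ (𝒯 : Set (Set Plane))) θ + ∑ X ∈ 𝒯, sfn (D ∩ X) θ ≤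
      sfn D θ + ∑ X ∈ 𝒯, sfn X θ := by
  classical
  have hUfin : (⋃₀ (𝒯 : Set (Set Plane))).Finite :=
    Set.Finite.sUnion 𝒯.finite_toSet (fun X hX => hfin X hX)
  obtain ⟨X₀, hX₀⟩ := h𝒯ne
  have hUne : (⋃₀ (𝒯 : Set (Set Plane))).Nonempty := by
    obtain ⟨p, hp⟩ := hXne X₀ hX₀
    exact ⟨p, X₀, by exact_mod_cast hX₀, hp⟩
  -- the sup over the union is attained in some member X⋆
  set f : Plane → ℝ := fun p => p 0 * Real.cos θ + p 1 * Real.sin θ with hf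
  have hmem : sSup (f '' (⋃₀ (𝒯 : Set (Set Plane)))) ∈
      f '' (⋃₀ (𝒯 : Set (Set Plane))) :=
    Set.Nonempty.csSup_mem (hUne.image f) (hUfin.image f)
  obtain ⟨p, hpU, hpeq⟩ := hmem
  obtain ⟨X, hX𝒯, hpX⟩ := hpU
  have hX𝒯' : X ∈ 𝒯 := by exact_mod_cast hX𝒯
  have hUX : sfn (⋃₀ (𝒯 : Set (Set Plane))) θ ≤ sfn X θ := by
    have : f p ≤ sfn X θ :=
      le_csSup ((hfin X hX𝒯').image f).bddAbove (Set.mem_image_of_mem f hpX)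
    calc sfn (⋃₀ (𝒯 : Set (Set Plane))) θ = f p := hpeq.symm
      _ ≤ sfn X θ := this
  have h1 : sfn (D ∩ X) θ ≤ sfn D θ :=
    sfn_mono hD (hDX X hX𝒯') Set.inter_subset_left θ
  have h2 : ∀ Y ∈ 𝒯.erase X, sfn (D ∩ Y) θ ≤ sfn Y θ := by
    intro Y hY
    have hY𝒯 := Finset.mem_of_mem_erase hY
    exact sfn_mono (hfin Y hY𝒯) (hDX Y hY𝒯) Set.inter_subset_right θ
  have hsplit1 : sfn (D ∩ X) θ + ∑ Y ∈ 𝒯.erase X, sfn (D ∩ Y) θ =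
      ∑ Y ∈ 𝒯, sfn (D ∩ Y) θ :=
    Finset.add_sum_erase 𝒯 (fun Y => sfn (D ∩ Y) θ) hX𝒯'
  have hsplit2 : sfn X θ + ∑ Y ∈ 𝒯.erase X, sfn Y θ = ∑ Y ∈ 𝒯, sfn Y θ :=
    Finset.add_sum_erase 𝒯 (fun Y => sfn Y θ) hX𝒯'
  have hsum : ∑ Y ∈ 𝒯.erase X, sfn (D ∩ Y) θ ≤ ∑ Y ∈ 𝒯.erase X, sfn Y θ :=
    Finset.sum_le_sum h2
  linarith

/-- integrated key inequality -/
lemma key_integral (𝒯 : Finset (Set Plane)) (h𝒯ne : 𝒯.Nonempty)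
    (hfin : ∀ X ∈ 𝒯, (X : Set Plane).Finite)
    (hXne : ∀ X ∈ 𝒯, (X : Set Plane).Nonempty)
    (D : Set Plane) (hD : D.Finite) (hDne : D.Nonempty)
    (hDX : ∀ X ∈ 𝒯, (D ∩ X).Nonempty) :
    perim (⋃₀ (𝒯 : Set (Set Plane))) + ∑ X ∈ 𝒯, perim (D ∩ X) ≤
      perim D + ∑ X ∈ 𝒯, perim X := by
  classical
  have hUfin : (⋃₀ (𝒯 : Set (Set Plane))).Finite :=
    Set.Finite.sUnion 𝒯.finite_toSet (fun X hX => hfin X hX)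
  obtain ⟨X₀, hX₀⟩ := h𝒯ne
  have hUne : (⋃₀ (𝒯 : Set (Set Plane))).Nonempty := by
    obtain ⟨p, hp⟩ := hXne X₀ hX₀
    exact ⟨p, X₀, by exact_mod_cast hX₀, hp⟩
  have hintU := intervalIntegrable_sfn hUfin hUne
  have hintD := intervalIntegrable_sfn hD hDne
  have hintDX : ∀ X ∈ 𝒯, IntervalIntegrable (sfn (D ∩ X))
      MeasureTheory.volume 0 (2 * Real.pi) := fun X hX =>
    intervalIntegrable_sfn ((hD.subset Set.inter_subset_left)) (hDX X hX)
  have hintX : ∀ X ∈ 𝒯, IntervalIntegrable (sfn X)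
      MeasureTheory.volume 0 (2 * Real.pi) := fun X hX =>
    intervalIntegrable_sfn (hfin X hX) (hXne X hX)
  have hle : (∫ θ in (0:ℝ)..(2 * Real.pi),
        (sfn (⋃₀ (𝒯 : Set (Set Plane))) θ + ∑ X ∈ 𝒯, sfn (D ∩ X) θ)) ≤
      ∫ θ in (0:ℝ)..(2 * Real.pi), (sfn D θ + ∑ X ∈ 𝒯, sfn X θ) := by
    apply intervalIntegral.integral_mono_on
      (by positivity : (0:ℝ) ≤ 2 * Real.pi)
    · exact hintU.add (intervalIntegrable_sum 𝒯 _ hintDX)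
    · exact hintD.add (intervalIntegrable_sum 𝒯 _ hintX)
    · intro θ _
      exact key_pointwise 𝒯 ⟨X₀, hX₀⟩ hfin hXne D hD hDne hDX θ
  rw [intervalIntegral.integral_add hintU (intervalIntegrable_sum 𝒯 _ hintDX),
    intervalIntegral.integral_add hintD (intervalIntegrable_sum 𝒯 _ hintX),
    intervalIntegral.integral_finset_sum hintDX,
    intervalIntegral.integral_finset_sum hintX] at hle
  simpa [perim_eq] using hle

/-- the heart of the theorem: clusters of the maximal optimal partition of a
subset are contained in the clusters of the maximal optimal partition of the
whole set, whenever they intersect them. -/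
lemma part1 (η : ℝ) (hη : 0 < η) (Atot B : Set Plane) (hAfin : Atot.Finite)
    (hBA : B ⊆ Atot) (𝒟 : Finset (Set Plane)) (h𝒟 : IsMaximalOptimal η B 𝒟)
    (𝒞tot : Finset (Set Plane)) (h𝒞tot : IsMaximalOptimal η Atot 𝒞tot)
    {C' : Set Plane} (hC'𝒟 : C' ∈ 𝒟) {C : Set Plane} (hC : C ∈ 𝒞tot)
    (hnei : (C' ∩ C).Nonempty) : C' ⊆ C := by
  classical
  obtain ⟨⟨⟨hDne, hDun, hDdisj⟩, hDopt⟩, hDmax⟩ := h𝒟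
  obtain ⟨⟨⟨hCne, hCun, hCdisj⟩, hCopt⟩, hCmax⟩ := h𝒞tot
  -- basic facts
  have hsubB : ∀ D ∈ 𝒟, D ⊆ B := by
    intro D hD
    rw [← hDun]
    exact Set.subset_sUnion_of_mem (by exact_mod_cast hD)
  have hsubA : ∀ X ∈ 𝒞tot, X ⊆ Atot := by
    intro X hX
    rw [← hCun]
    exact Set.subset_sUnion_of_mem (by exact_mod_cast hX)
  have hfinX : ∀ X ∈ 𝒞tot, (X : Set Plane).Finite :=
    fun X hX => hAfin.subset (hsubA X hX)
  have hC'B : C' ⊆ B := hsubB C' hC'𝒟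
  have hC'fin : C'.Finite := hAfin.subset (hC'B.trans hBA)
  by_contra hnsub
  obtain ⟨y, hyC', hyC⟩ := Set.not_subset.mp hnsub
  have hyA : y ∈ Atot := hBA (hC'B hyC')
  rw [← hCun] at hyA
  obtain ⟨C₂, hC₂mem, hyC₂⟩ := hyA
  have hC₂ : C₂ ∈ 𝒞tot := by exact_mod_cast hC₂mem
  have hCC₂ : C ≠ C₂ := fun h => hyC (h ▸ hyC₂)
  -- the clusters of 𝒞tot meeting C'
  set 𝒯 : Finset (Set Plane) := 𝒞tot.filter (fun X => (C' ∩ X).Nonempty) with h𝒯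
  have h𝒯sub : 𝒯 ⊆ 𝒞tot := Finset.filter_subset _ _
  have hC𝒯 : C ∈ 𝒯 := Finset.mem_filter.mpr ⟨hC, hnei⟩
  have hC₂𝒯 : C₂ ∈ 𝒯 := Finset.mem_filter.mpr ⟨hC₂, ⟨y, hyC', hyC₂⟩⟩
  have h𝒯card : 2 ≤ 𝒯.card := by
    have : 1 < 𝒯.card := Finset.one_lt_card.mpr ⟨C, hC𝒯, C₂, hC₂𝒯, hCC₂⟩
    omega
  have h𝒯ne : 𝒯.Nonempty := ⟨C, hC𝒯⟩
  have h𝒯fin : ∀ X ∈ 𝒯, (X : Set Plane).Finite := fun X hX => hfinX X (h𝒯sub hX)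
  have h𝒯Xne : ∀ X ∈ 𝒯, (X : Set Plane).Nonempty := fun X hX => hCne X (h𝒯sub hX)
  have h𝒯DX : ∀ X ∈ 𝒯, (C' ∩ X).Nonempty :=
    fun X hX => (Finset.mem_filter.mp hX).2
  set U : Set Plane := ⋃₀ (𝒯 : Set (Set Plane)) with hU
  have hCU : C ⊆ U := Set.subset_sUnion_of_mem (by exact_mod_cast hC𝒯)
  have hUne : U.Nonempty := (hCne C hC).mono hCU
  have hUnotin : U ∉ 𝒞tot \ 𝒯 := by
    intro h
    rw [Finset.mem_sdiff] at h
    have hne' : C ≠ U := fun hcu => h.2 (hcu ▸ hC𝒯)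
    have hdisj : Disjoint C U := hCdisj (by exact_mod_cast hC) (by exact_mod_cast h.1) hne'
    have hCempty : C = ∅ := by
      have h5 := Set.disjoint_iff_inter_eq_empty.mp hdisj
      rwa [Set.inter_eq_left.mpr hCU] at h5
    exact (hCne C hC).ne_empty hCempty
  -- the merged partition Q of Atot
  set Q : Finset (Set Plane) := insert U (𝒞tot \ 𝒯) with hQ
  have hQcard : Q.card + 𝒯.card = 𝒞tot.card + 1 := by
    have h1 : Q.card = (𝒞tot \ 𝒯).card + 1 := Finset.card_insert_of_notMem hUnotin
    have h2 : (𝒞tot \ 𝒯).card + 𝒯.card = 𝒞tot.card :=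
      Finset.card_sdiff_add_card_eq_card h𝒯sub
    omega
  have hQlt : Q.card < 𝒞tot.card := by omega
  have hQpart : IsPartition Atot Q := by
    refine ⟨?_, ?_, ?_⟩
    · intro X hX
      rcases Finset.mem_insert.mp hX with h | h
      · exact h ▸ hUne
      · exact hCne X (Finset.mem_sdiff.mp h).1
    · have h1 : (Q : Set (Set Plane)) = insert U ((𝒞tot \ 𝒯 : Finset (Set Plane)) : Set (Set Plane)) := by
        simp [hQ]
      rw [h1, Set.sUnion_insert, ← hCun]
      have h2 : 𝒯 ∪ (𝒞tot \ 𝒯) = 𝒞tot := Finset.union_sdiff_of_subset h𝒯sub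
      conv_rhs => rw [← h2]
      rw [Finset.coe_union, Set.sUnion_union]
    · intro x hx y hy hxy
      simp only [hQ, Finset.coe_insert, Set.mem_insert_iff, Finset.mem_coe] at hx hy
      have hdisjU : ∀ z ∈ 𝒞tot \ 𝒯, Disjoint U z := by
        intro z hz
        rw [Finset.mem_sdiff] at hz
        rw [hU, Set.disjoint_sUnion_left]
        intro t ht
        have ht𝒯 : t ∈ 𝒯 := by exact_mod_cast ht
        have htz : t ≠ z := fun h => hz.2 (h ▸ ht𝒯)
        exact hCdisj (by exact_mod_cast h𝒯sub ht𝒯) (by exact_mod_cast hz.1) htz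
      rcases hx with hx | hx <;> rcases hy with hy | hy
      · exact absurd (hx.trans hy.symm) hxy
      · subst hx; exact hdisjU y hy
      · subst hy; exact (hdisjU x hx).symm
      · exact hCdisj (by exact_mod_cast (Finset.mem_sdiff.mp hx).1)
          (by exact_mod_cast (Finset.mem_sdiff.mp hy).1) hxy
  -- strict inequality by maximality
  have h1 : cost η 𝒞tot < cost η Q := by
    rcases lt_or_eq_of_le (hCopt Q hQpart) with h | h
    · exact h
    · exfalso
      apply hCmax
      refine ⟨Q, ⟨hQpart, fun P hP => h ▸ hCopt P hP⟩, hQlt, ?_⟩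
      intro X hX
      by_cases hX𝒯 : X ∈ 𝒯
      · exact ⟨U, Finset.mem_insert_self _ _,
          Set.subset_sUnion_of_mem (by exact_mod_cast hX𝒯)⟩
      · exact ⟨X, Finset.mem_insert_of_mem (Finset.mem_sdiff.mpr ⟨hX, hX𝒯⟩),
          subset_rfl⟩
  -- the refined partition R of B
  have hinj : ∀ X ∈ 𝒯, ∀ Y ∈ 𝒯, C' ∩ X = C' ∩ Y → X = Y := by
    intro X hX Y hY hXY
    by_contra hne'
    have hdisj : Disjoint X Y :=
      hCdisj (by exact_mod_cast h𝒯sub hX) (by exact_mod_cast h𝒯sub hY) hne'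
    obtain ⟨p, hp⟩ := h𝒯DX X hX
    have hpY : p ∈ C' ∩ Y := hXY ▸ hp
    exact Set.disjoint_left.mp hdisj hp.2 hpY.2
  set R : Finset (Set Plane) :=
    (𝒟.erase C') ∪ 𝒯.image (fun X => C' ∩ X) with hR
  have hdisjR : Disjoint (𝒟.erase C') (𝒯.image (fun X => C' ∩ X)) := by
    rw [Finset.disjoint_left]
    intro Z hZe hZi
    obtain ⟨X, hX𝒯, hXZ⟩ := Finset.mem_image.mp hZi
    have hZ𝒟 : Z ∈ 𝒟 := Finset.mem_of_mem_erase hZe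
    have hZC' : Z ≠ C' := Finset.ne_of_mem_erase hZe
    have hdisj : Disjoint Z C' := hDdisj (by exact_mod_cast hZ𝒟) (by exact_mod_cast hC'𝒟) hZC'
    obtain ⟨p, hp⟩ := h𝒯DX X hX𝒯
    have hpZ : p ∈ Z := hXZ ▸ hp
    exact Set.disjoint_left.mp hdisj hpZ hp.1
  have hRcard : R.card + 1 = 𝒟.card + 𝒯.card := by
    have h1 : R.card = (𝒟.erase C').card + (𝒯.image (fun X => C' ∩ X)).card :=
      Finset.card_union_of_disjoint hdisjR
    have h2 : (𝒯.image (fun X => C' ∩ X)).card = 𝒯.card :=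
      Finset.card_image_of_injOn hinj
    have h3 : (𝒟.erase C').card + 1 = 𝒟.card := Finset.card_erase_add_one hC'𝒟
    omega
  have hC'union : ⋃₀ ((𝒯.image (fun X => C' ∩ X) : Finset (Set Plane)) : Set (Set Plane)) = C' := by
    apply Set.eq_of_subset_of_subset
    · apply Set.sUnion_subset
      intro Z hZ
      obtain ⟨X, hX𝒯, hXZ⟩ := Finset.mem_image.mp (by exact_mod_cast hZ)
      exact hXZ ▸ Set.inter_subset_left
    · intro p hp
      have hpA : p ∈ Atot := hBA (hC'B hp)
      rw [← hCun] at hpA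
      obtain ⟨X, hXmem, hpX⟩ := hpA
      have hX𝒞 : X ∈ 𝒞tot := by exact_mod_cast hXmem
      have hX𝒯 : X ∈ 𝒯 := Finset.mem_filter.mpr ⟨hX𝒞, ⟨p, hp, hpX⟩⟩
      exact ⟨C' ∩ X, by exact_mod_cast Finset.mem_image_of_mem _ hX𝒯, hp, hpX⟩
  have hRpart : IsPartition B R := by
    refine ⟨?_, ?_, ?_⟩
    · intro Z hZ
      rcases Finset.mem_union.mp hZ with h | h
      · exact hDne Z (Finset.mem_of_mem_erase h)
      · obtain ⟨X, hX𝒯, hXZ⟩ := Finset.mem_image.mp h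
        exact hXZ ▸ h𝒯DX X hX𝒯
    · have h1 : (R : Set (Set Plane)) =
          ((𝒟.erase C' : Finset (Set Plane)) : Set (Set Plane)) ∪
          ((𝒯.image (fun X => C' ∩ X) : Finset (Set Plane)) : Set (Set Plane)) := by
        simp [hR]
      rw [h1, Set.sUnion_union, hC'union]
      have h2 : insert C' (𝒟.erase C') = 𝒟 := Finset.insert_erase hC'𝒟
      calc ⋃₀ ((𝒟.erase C' : Finset (Set Plane)) : Set (Set Plane)) ∪ C'
          = C' ∪ ⋃₀ ((𝒟.erase C' : Finset (Set Plane)) : Set (Set Plane)) := Set.union_comm _ _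
        _ = ⋃₀ (insert C' ((𝒟.erase C' : Finset (Set Plane)) : Set (Set Plane))) :=
            (Set.sUnion_insert _ _).symm
        _ = ⋃₀ ((𝒟 : Set (Set Plane))) := by rw [← h2]; simp
        _ = B := hDun
    · intro x hx y hy hxy
      simp only [hR, Finset.coe_union, Set.mem_union, Finset.mem_coe] at hx hy
      have hpieceC' : ∀ z ∈ 𝒯.image (fun X => C' ∩ X), z ⊆ C' := by
        intro z hz
        obtain ⟨X, hX𝒯, hXz⟩ := Finset.mem_image.mp hz
        exact hXz ▸ Set.inter_subset_left
      have hdisjEI : ∀ a ∈ 𝒟.erase C', ∀ b ∈ 𝒯.image (fun X => C' ∩ X),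
          Disjoint (a : Set Plane) b := by
        intro a ha b hb
        have ha𝒟 : a ∈ 𝒟 := Finset.mem_of_mem_erase ha
        have haC' : a ≠ C' := Finset.ne_of_mem_erase ha
        have : Disjoint a C' := hDdisj (by exact_mod_cast ha𝒟) (by exact_mod_cast hC'𝒟) haC'
        exact this.mono_right (hpieceC' b hb)
      rcases hx with hx | hx <;> rcases hy with hy | hy
      · exact hDdisj (by exact_mod_cast Finset.mem_of_mem_erase hx)
          (by exact_mod_cast Finset.mem_of_mem_erase hy) hxy
      · exact hdisjEI x hx y hy
      · exact (hdisjEI y hy x hx).symm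
      · obtain ⟨X, hX𝒯, hXx⟩ := Finset.mem_image.mp hx
        obtain ⟨Y, hY𝒯, hYy⟩ := Finset.mem_image.mp hy
        have hXY : X ≠ Y := by
          intro h
          exact hxy (hXx ▸ hYy ▸ h ▸ rfl)
        have : Disjoint X Y :=
          hCdisj (by exact_mod_cast h𝒯sub hX𝒯) (by exact_mod_cast h𝒯sub hY𝒯) hXY
        have := this.mono_left (Set.inter_subset_right : C' ∩ X ⊆ X)
        exact hXx ▸ hYy ▸ this.mono_right (Set.inter_subset_right : C' ∩ Y ⊆ Y)
  have h2 : cost η 𝒟 ≤ cost η R := hDopt R hRpart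
  -- key integral inequality
  have h3 : perim U + ∑ X ∈ 𝒯, perim (C' ∩ X) ≤ perim C' + ∑ X ∈ 𝒯, perim X :=
    key_integral 𝒯 h𝒯ne h𝒯fin h𝒯Xne C' hC'fin (hDne C' hC'𝒟) h𝒯DX
  -- cost computations
  have hsumQ : ∑ X ∈ Q, perim X = perim U + ∑ X ∈ 𝒞tot \ 𝒯, perim X := by
    rw [hQ]; exact Finset.sum_insert hUnotin
  have hcostQ : cost η Q = η * (Q.card : ℝ) +
      (perim U + ∑ X ∈ 𝒞tot \ 𝒯, perim X) := by
    rw [cost, hsumQ]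
  have hcostC : cost η 𝒞tot = η * (𝒞tot.card : ℝ) +
      (∑ X ∈ 𝒞tot \ 𝒯, perim X + ∑ X ∈ 𝒯, perim X) := by
    rw [cost, Finset.sum_sdiff h𝒯sub]
  have hsumR : ∑ X ∈ R, perim X =
      ∑ X ∈ 𝒟.erase C', perim X + ∑ X ∈ 𝒯, perim (C' ∩ X) := by
    rw [hR, Finset.sum_union hdisjR, Finset.sum_image hinj]
  have hcostR : cost η R = η * (R.card : ℝ) +
      (∑ X ∈ 𝒟.erase C', perim X + ∑ X ∈ 𝒯, perim (C' ∩ X)) := by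
    rw [cost, hsumR]
  have hcostD : cost η 𝒟 = η * (𝒟.card : ℝ) +
      (perim C' + ∑ X ∈ 𝒟.erase C', perim X) := by
    rw [cost, ← Finset.add_sum_erase _ _ hC'𝒟]
  rw [hcostQ, hcostC] at h1
  rw [hcostR, hcostD] at h2
  have hcast1 : (Q.card : ℝ) = (𝒞tot.card : ℝ) + 1 - (𝒯.card : ℝ) := by
    have := hQcard
    have : (Q.card : ℝ) + (𝒯.card : ℝ) = (𝒞tot.card : ℝ) + 1 := by
      exact_mod_cast congrArg (fun n : ℕ => (n : ℝ)) this
    linarith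
  have hcast2 : (R.card : ℝ) = (𝒟.card : ℝ) + (𝒯.card : ℝ) - 1 := by
    have := hRcard
    have : (R.card : ℝ) + 1 = (𝒟.card : ℝ) + (𝒯.card : ℝ) := by
      exact_mod_cast congrArg (fun n : ℕ => (n : ℝ)) this
    linarith
  rw [hcast1] at h1
  rw [hcast2] at h2
  nlinarith [h1, h2, h3]

end BigClusterAux

/-- first part of Lemma 5: with `A = ⋃ᵢ Aᵢ = ⋃ᵢ (A \ Aᵢ)`,
any cluster of the maximal optimal partition of `A \ Aᵢ` intersecting a cluster
of the maximal optimal partition of `A` is contained in it; consequently every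
cluster of the latter is the union of the clusters of the former contained in it. -/
theorem big_cluster_property_containment
    (η : ℝ) (hη : 0 < η)
    (ι : Type) [Fintype ι] [Nonempty ι]
    (A : ι → Set Plane) (hfin : ∀ i, (A i).Finite)
    (Atot : Set Plane) (hAtot : Atot = ⋃ i, A i)
    (hcompl : Atot = ⋃ i, Atot \ A i)
    (𝒞 : ι → Finset (Set Plane))
    (h𝒞 : ∀ i, IsMaximalOptimal η (Atot \ A i) (𝒞 i))
    (𝒞tot : Finset (Set Plane)) (h𝒞tot : IsMaximalOptimal η Atot 𝒞tot) :
    (∀ i : ι, ∀ C' ∈ 𝒞 i, ∀ C ∈ 𝒞tot, (C' ∩ C).Nonempty → C' ⊆ C) ∧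
    (∀ C ∈ 𝒞tot, C = ⋃₀ {C' : Set Plane | (∃ i : ι, C' ∈ 𝒞 i) ∧ C' ⊆ C}) := by
  have hAfin : Atot.Finite := by
    rw [hAtot]; exact Set.finite_iUnion hfin
  have hpart1 : ∀ i : ι, ∀ C' ∈ 𝒞 i, ∀ C ∈ 𝒞tot, (C' ∩ C).Nonempty → C' ⊆ C := by
    intro i C' hC' C hC hne
    exact BigClusterAux.part1 η hη Atot (Atot \ A i) hAfin Set.diff_subset
      (𝒞 i) (h𝒞 i) 𝒞tot h𝒞tot hC' hC hne
  refine ⟨hpart1, ?_⟩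
  intro C hC
  apply Set.eq_of_subset_of_subset
  · intro p hp
    have hpA : p ∈ Atot := by
      obtain ⟨⟨⟨_, hCun, _⟩, _⟩, _⟩ := h𝒞tot
      rw [← hCun]
      exact ⟨C, by exact_mod_cast hC, hp⟩
    rw [hcompl] at hpA
    obtain ⟨s, ⟨i, rfl⟩, hps0⟩ := hpA
    have hps : p ∈ Atot \ A i := hps0
    obtain ⟨⟨⟨_, hiun, _⟩, _⟩, _⟩ := h𝒞 i
    rw [← hiun] at hps
    obtain ⟨C', hC'mem, hpC'⟩ := hps
    have hC'i : C' ∈ 𝒞 i := by exact_mod_cast hC'mem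
    have hsub : C' ⊆ C := hpart1 i C' hC'i C hC ⟨p, hpC', hp⟩
    exact ⟨C', ⟨⟨i, hC'i⟩, hsub⟩, hpC'⟩
  · apply Set.sUnion_subset
    intro C' hC'
    exact hC'.2

end
end
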